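/- The union over τ* ∈ [π/2, π) of the sets ⋄^{τ*} equals ⋄₊, and for all 0 < τ₀ < τ₁ < π one has the strict inclusions ⋄^{τ₀} ⊊ ⋄^{τ₁} ⊊ ⋄₊. -/

import Mathlib

/-- The unit three-sphere in `ℝ⁴` (as the set of `ξ : Fin 4 → ℝ` of unit length,
indexed so that `ξ 3 = ξ⁴`). -/
def sphere3 : Set (Fin 4 → ℝ) := {ξ | (ξ 0) ^ 2 + (ξ 1) ^ 2 + (ξ 2) ^ 2 + (ξ 3) ^ 2 = 1}

/-- `h(τ,ξ) = cos τ - ξ⁴`. -/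
noncomputable def hfun (p : ℝ × (Fin 4 → ℝ)) : ℝ := Real.cos p.1 - p.2 3

/-- `ℏ(τ,ξ) = cos τ + ξ⁴`. -/
noncomputable def hbarfun (p : ℝ × (Fin 4 → ℝ)) : ℝ := Real.cos p.1 + p.2 3

/-- `𝔰(τ,ξ) = (2 sin τ + √(1 - (ξ⁴)²)) / ℏ(τ,ξ)`. -/
noncomputable def sfun (p : ℝ × (Fin 4 → ℝ)) : ℝ :=
  (2 * Real.sin p.1 + Real.sqrt (1 - (p.2 3) ^ 2)) / hbarfun p

/-- The future half of the Minkowski diamond,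
`⋄₊ = {(τ,ξ) ∈ [0,π) × S³ : h(τ,ξ) > 0}`. -/
def diamondPlus : Set (ℝ × (Fin 4 → ℝ)) :=
  {p | p.2 ∈ sphere3 ∧ 0 ≤ p.1 ∧ p.1 < Real.pi ∧ 0 < hfun p}

/-- `Δ_{<r} = {(τ,ξ) ∈ ⋄₊ : ℏ(τ,ξ) > 0 and 𝔰(τ,ξ) < r}`. -/
noncomputable def deltaLT (r : ℝ) : Set (ℝ × (Fin 4 → ℝ)) :=
  {p ∈ diamondPlus | 0 < hbarfun p ∧ sfun p < r}

/-- `⋄ₛ = ⋄₊ \ Δ_{<s/6}`. -/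
noncomputable def diamondS (s : ℝ) : Set (ℝ × (Fin 4 → ℝ)) := diamondPlus \ deltaLT (s / 6)

/-- `⋄_{τ,s} = ({τ} × S³) ∩ ⋄ₛ`. -/
noncomputable def diamondTauS (τ s : ℝ) : Set (ℝ × (Fin 4 → ℝ)) :=
  ({τ} ×ˢ (Set.univ : Set (Fin 4 → ℝ))) ∩ diamondS s

/-- `φ(τ,ξ) = √((1 - cos τ)/(1 - ξ⁴))`. -/
noncomputable def phifun (p : ℝ × (Fin 4 → ℝ)) : ℝ :=
  Real.sqrt ((1 - Real.cos p.1) / (1 - p.2 3))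

/-- `⋄^{τ*} = {(τ,ξ) ∈ ⋄₊ : 0 ≤ τ ≤ τ* and φ(τ,ξ) ≤ √((1 - cos((τ*+π)/2))/2)}`. -/
noncomputable def diamondUpTo (τstar : ℝ) : Set (ℝ × (Fin 4 → ℝ)) :=
  {p ∈ diamondPlus | 0 ≤ p.1 ∧ p.1 ≤ τstar ∧
    phifun p ≤ Real.sqrt ((1 - Real.cos ((τstar + Real.pi) / 2)) / 2)}

namespace Stmt8Aux

open Real Set

lemma mem_diamondPlus_iff {p : ℝ × (Fin 4 → ℝ)} :
    p ∈ diamondPlus ↔ p.2 ∈ sphere3 ∧ 0 ≤ p.1 ∧ p.1 < Real.pi ∧ 0 < hfun p := Iff.rfl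

lemma mem_diamondUpTo_iff {τ : ℝ} {p : ℝ × (Fin 4 → ℝ)} :
    p ∈ diamondUpTo τ ↔ p ∈ diamondPlus ∧ 0 ≤ p.1 ∧ p.1 ≤ τ ∧
      phifun p ≤ Real.sqrt ((1 - Real.cos ((τ + Real.pi) / 2)) / 2) := Iff.rfl

/-- the distinguished south-pole point at time t -/
noncomputable def pt (t : ℝ) : ℝ × (Fin 4 → ℝ) := (t, ![0,0,0,-1])

lemma pt_mem_diamondPlus {t : ℝ} (h0 : 0 ≤ t) (h1 : t < Real.pi) :
    pt t ∈ diamondPlus := by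
  refine ⟨?_, h0, h1, ?_⟩
  · simp [sphere3, pt]
  · have : Real.cos Real.pi < Real.cos t := by
      rcases eq_or_lt_of_le h0 with h | h
      · rw [← h]; simpa using Real.cos_lt_cos_of_nonneg_of_le_pi le_rfl le_rfl Real.pi_pos
      · exact Real.cos_lt_cos_of_nonneg_of_le_pi h0 le_rfl h1
    simp only [hfun, pt]
    simp only [Real.cos_pi] at this
    norm_num
    linarith [show (![0, 0, 0, -1] : Fin 4 → ℝ) 3 = -1 from rfl]

lemma phifun_pt (t : ℝ) : phifun (pt t) = Real.sqrt ((1 - Real.cos t) / 2) := by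
  simp [phifun, pt]
  norm_num

lemma pt_mem_diamondUpTo {t : ℝ} (h0 : 0 ≤ t) (h1 : t < Real.pi) :
    pt t ∈ diamondUpTo t := by
  refine ⟨pt_mem_diamondPlus h0 h1, h0, le_rfl, ?_⟩
  rw [phifun_pt]
  apply Real.sqrt_le_sqrt
  have : Real.cos ((t + Real.pi) / 2) ≤ Real.cos t :=
    Real.cos_le_cos_of_nonneg_of_le_pi h0 (by linarith) (by linarith)
  linarith

lemma mono {τ₀ τ₁ : ℝ} (h0 : 0 ≤ τ₀) (h01 : τ₀ ≤ τ₁) (h1 : τ₁ < Real.pi) :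
    diamondUpTo τ₀ ⊆ diamondUpTo τ₁ := by
  rintro p ⟨hp, hp0, hp1, hp2⟩
  refine ⟨hp, hp0, hp1.trans h01, hp2.trans ?_⟩
  apply Real.sqrt_le_sqrt
  have : Real.cos ((τ₁ + Real.pi) / 2) ≤ Real.cos ((τ₀ + Real.pi) / 2) :=
    Real.cos_le_cos_of_nonneg_of_le_pi (by linarith [Real.pi_pos]) (by linarith) (by linarith)
  linarith

lemma phifun_lt_one {p : ℝ × (Fin 4 → ℝ)} (hp : p ∈ diamondPlus) : phifun p < 1 := by
  obtain ⟨hs, h0, h1, hh⟩ := hp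
  have hcos : Real.cos p.1 ≤ 1 := Real.cos_le_one _
  have hx : p.2 3 < Real.cos p.1 := by simpa [hfun, sub_pos] using hh
  have hden : 0 < 1 - p.2 3 := by linarith
  have : (1 - Real.cos p.1) / (1 - p.2 3) < 1 := by
    rw [div_lt_one hden]; linarith
  calc phifun p < Real.sqrt 1 := by
        apply Real.sqrt_lt_sqrt (div_nonneg (by linarith) hden.le) (by simpa using this)
      _ = 1 := Real.sqrt_one

end Stmt8Aux

/-- Lemma 5.3 (lem:Dexhaustion) of the paper: the sets `⋄^{τ*}` for
`τ* ∈ [π/2,π)` exhaust `⋄₊`, and for `0 < τ₀ < τ₁ < π` one has the strict inclusions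
`⋄^{τ₀} ⊊ ⋄^{τ₁} ⊊ ⋄₊`. -/
theorem stmt8 :
    (⋃ τstar ∈ Set.Ico (Real.pi / 2) Real.pi, diamondUpTo τstar) = diamondPlus ∧
    (∀ τ₀ τ₁ : ℝ, 0 < τ₀ → τ₀ < τ₁ → τ₁ < Real.pi →
      diamondUpTo τ₀ ⊂ diamondUpTo τ₁ ∧ diamondUpTo τ₁ ⊂ diamondPlus) := by
  open Stmt8Aux in
  constructor
  · apply Set.Subset.antisymm
    · intro p hp
      simp only [Set.mem_iUnion] at hp
      obtain ⟨τ, _, hpt⟩ := hp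
      exact hpt.1
    · intro p hp
      have hc1 : phifun p < 1 := phifun_lt_one hp
      have hc0 : 0 ≤ phifun p := Real.sqrt_nonneg _
      set c := phifun p with hc
      have hcsq : c ^ 2 < 1 := by nlinarith
      have hm1 : (-1 : ℝ) < 1 - 2 * c ^ 2 := by nlinarith
      have hle1 : 1 - 2 * c ^ 2 ≤ 1 := by nlinarith
      set a := Real.arccos (1 - 2 * c ^ 2) with ha
      have ha_le : a ≤ Real.pi := Real.arccos_le_pi _
      have ha_lt : a < Real.pi := by
        rcases lt_or_eq_of_le ha_le with h | h
        · exact h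
        · exfalso; have := Real.arccos_eq_pi.mp h; linarith
      have ha0 : 0 ≤ a := Real.arccos_nonneg _
      have hp0 := hp.2.1
      have hp1 := hp.2.2.1
      set τ := max (max p.1 (Real.pi / 2)) (2 * a - Real.pi) with hτ
      have hτ_lt : τ < Real.pi := by
        apply max_lt (max_lt hp1 (by linarith [Real.pi_pos])) (by linarith)
      have hτ_ge : Real.pi / 2 ≤ τ := le_max_of_le_left (le_max_right _ _)
      have hτ_ge0 : 0 ≤ τ := le_trans (by linarith [Real.pi_pos]) hτ_ge
      simp only [Set.mem_iUnion]
      refine ⟨τ, ⟨hτ_ge, hτ_lt⟩, hp, hp0, le_max_of_le_left (le_max_left _ _), ?_⟩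
      have hcosle : Real.cos ((τ + Real.pi) / 2) ≤ 1 - 2 * c ^ 2 := by
        have h1 : a ≤ (τ + Real.pi) / 2 := by
          have : 2 * a - Real.pi ≤ τ := le_max_right _ _
          linarith
        have h2 : (τ + Real.pi) / 2 ≤ Real.pi := by linarith
        have := Real.cos_le_cos_of_nonneg_of_le_pi ha0 h2 h1
        rwa [Real.cos_arccos hm1.le hle1] at this
      have : c ^ 2 ≤ (1 - Real.cos ((τ + Real.pi) / 2)) / 2 := by linarith
      calc c = Real.sqrt (c ^ 2) := by rw [Real.sqrt_sq hc0]
        _ ≤ _ := Real.sqrt_le_sqrt this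
  · intro τ₀ τ₁ h0 h01 h1
    refine ⟨⟨mono h0.le h01.le h1, ?_⟩, ⟨fun p hp => hp.1, ?_⟩⟩
    · intro hsub
      have := hsub (pt_mem_diamondUpTo (by linarith) h1)
      have := this.2.2.1
      simp only [pt] at this
      linarith
    · intro hsub
      have hmem : pt ((τ₁ + Real.pi) / 2) ∈ diamondPlus :=
        pt_mem_diamondPlus (by linarith [Real.pi_pos]) (by linarith)
      have := (hsub hmem).2.2.1
      simp only [pt] at this
      linarith
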